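/- Fix ω ∈ ℝ and (normalizing g = h₀ = 1) let c(k) = (ω/2)·tanh(k)/k + √(tanh(k)/k + (ω²/4)·(tanh(k)/k)²) for k > 0. Then c is strictly positive and strictly decreasing on (0,∞). Consequently, for every k > 0, c(k)² − c(2k)² > 0; in particular the second-harmonic resonance index i₃(k) = c²(k) − c²(2k) of the full-dispersion shallow water equations never vanishes, for any constant vorticity ω. -/

import Mathlib

open Real

private lemma tanh_div_strictAnti : StrictAntiOn (fun k : ℝ => Real.tanh k / k) (Set.Ioi 0) := by
  apply strictAntiOn_of_deriv_neg (convex_Ioi 0)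
  · have hct : Continuous Real.tanh := by
      have he : Real.tanh = fun x => Real.sinh x / Real.cosh x :=
        funext fun x => Real.tanh_eq_sinh_div_cosh x
      rw [he]
      exact Real.continuous_sinh.div Real.continuous_cosh fun x => (Real.cosh_pos x).ne'
    exact hct.continuousOn.div continuousOn_id (fun x hx => ne_of_gt hx)
  · intro x hx
    rw [interior_Ioi] at hx
    have hx0 : (0:ℝ) < x := hx
    have hch : (0:ℝ) < Real.cosh x := Real.cosh_pos x
    have hdt : HasDerivAt Real.tanh (1 / Real.cosh x ^ 2) x := by
      have h := (Real.hasDerivAt_sinh x).div (Real.hasDerivAt_cosh x) (ne_of_gt hch)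
      have : (Real.cosh x * Real.cosh x - Real.sinh x * Real.sinh x) / Real.cosh x ^ 2
          = 1 / Real.cosh x ^ 2 := by
        rw [show Real.cosh x * Real.cosh x - Real.sinh x * Real.sinh x
            = Real.cosh x ^ 2 - Real.sinh x ^ 2 by ring, Real.cosh_sq_sub_sinh_sq]
      rw [this] at h
      exact h.congr_of_eventuallyEq (by
        filter_upwards with y
        rw [Real.tanh_eq_sinh_div_cosh]; rfl)
    have hdf : HasDerivAt (fun k : ℝ => Real.tanh k / k)
        ((1 / Real.cosh x ^ 2 * x - Real.tanh x * 1) / x ^ 2) x :=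
      hdt.div (hasDerivAt_id x) (ne_of_gt hx0)
    rw [hdf.deriv]
    apply div_neg_of_neg_of_pos _ (by positivity)
    have hs : x < Real.sinh x := Real.self_lt_sinh_iff.mpr hx0
    have hc1 : 1 ≤ Real.cosh x := Real.one_le_cosh x
    rw [Real.tanh_eq_sinh_div_cosh]
    have hkey : x < Real.sinh x * Real.cosh x := by nlinarith [Real.sinh_pos_iff.mpr hx0]
    have hlt : 1 / Real.cosh x ^ 2 * x < Real.sinh x / Real.cosh x := by
      rw [div_mul_eq_mul_div, div_lt_div_iff₀ (by positivity) hch]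
      nlinarith
    linarith

/-- With `g = h₀ = 1`, the phase speed `c(k)` of linear water waves with constant
vorticity `ω` is strictly positive and strictly decreasing on `(0,∞)`; consequently the
second-harmonic resonance index `i₃(k) = c²(k) - c²(2k)` of the full-dispersion shallow
water equations never vanishes, for any constant vorticity. -/
theorem second_harmonic_resonance_never_occurs
    (ω : ℝ)
    (c : ℝ → ℝ)
    (hc : ∀ k : ℝ, c k = ω / 2 * (Real.tanh k / k)
      + Real.sqrt (Real.tanh k / k + ω ^ 2 / 4 * (Real.tanh k / k) ^ 2)) :
    (∀ k > (0 : ℝ), 0 < c k) ∧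
    StrictAntiOn c (Set.Ioi 0) ∧
    ∀ k > (0 : ℝ), c k ^ 2 - c (2 * k) ^ 2 > 0 := by
  -- F t = (ω/2) t + sqrt (t + ω²/4 t²) ; h t = sqrt(1/t + ω²/4) - ω/2 ; F t = 1 / h t
  set F : ℝ → ℝ := fun t => ω / 2 * t + Real.sqrt (t + ω ^ 2 / 4 * t ^ 2) with hF
  set h : ℝ → ℝ := fun t => Real.sqrt (1 / t + ω ^ 2 / 4) - ω / 2 with hh
  have hpos : ∀ t : ℝ, 0 < t → 0 < h t := by
    intro t ht
    have h1 : (ω/2) ^ 2 < 1 / t + ω ^ 2 / 4 := by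
      have : (ω/2)^2 = ω^2/4 := by ring
      rw [this]; linarith [one_div_pos.mpr ht]
    have h2 : ω / 2 < Real.sqrt (1 / t + ω ^ 2 / 4) := by
      have h3 : |ω / 2| < Real.sqrt (1 / t + ω ^ 2 / 4) := by
        rw [← Real.sqrt_sq_eq_abs]
        exact Real.sqrt_lt_sqrt (sq_nonneg _) h1
      exact lt_of_le_of_lt (le_abs_self _) h3
    simpa [hh] using sub_pos.mpr h2
  have hFh : ∀ t : ℝ, 0 < t → F t = 1 / h t := by
    intro t ht
    have ha : (0:ℝ) ≤ 1 / t + ω ^ 2 / 4 := by positivity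
    have hsq : Real.sqrt (1 / t + ω ^ 2 / 4) ^ 2 = 1 / t + ω ^ 2 / 4 := Real.sq_sqrt ha
    have hkey : Real.sqrt (t + ω ^ 2 / 4 * t ^ 2)
        = t * Real.sqrt (1 / t + ω ^ 2 / 4) := by
      rw [show t + ω ^ 2 / 4 * t ^ 2 = (t * Real.sqrt (1 / t + ω ^ 2 / 4)) ^ 2 by
        rw [mul_pow, hsq]; field_simp]
      exact Real.sqrt_sq (by positivity)
    rw [hF]
    simp only
    rw [hkey, eq_div_iff (ne_of_gt (hpos t ht))]
    rw [hh]
    simp only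
    have : (ω / 2 * t + t * Real.sqrt (1 / t + ω ^ 2 / 4))
        * (Real.sqrt (1 / t + ω ^ 2 / 4) - ω / 2)
        = t * (Real.sqrt (1 / t + ω ^ 2 / 4) ^ 2 - (ω/2)^2) := by ring
    rw [this, hsq]; field_simp; ring
  have hFmono : ∀ t₁ t₂ : ℝ, 0 < t₁ → t₁ < t₂ → F t₁ < F t₂ := by
    intro t₁ t₂ h1 h12
    have h2 : 0 < t₂ := lt_trans h1 h12
    rw [hFh t₁ h1, hFh t₂ h2]
    apply one_div_lt_one_div_of_lt (hpos t₂ h2)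
    rw [hh]; simp only
    have : 1 / t₂ + ω ^ 2 / 4 < 1 / t₁ + ω ^ 2 / 4 := by
      have := one_div_lt_one_div_of_lt h1 h12; linarith
    linarith [Real.sqrt_lt_sqrt (by positivity : (0:ℝ) ≤ 1/t₂ + ω^2/4) this]
  have hcF : ∀ k : ℝ, c k = F (Real.tanh k / k) := fun k => hc k
  have htpos : ∀ k : ℝ, 0 < k → 0 < Real.tanh k / k := by
    intro k hk
    apply div_pos _ hk
    rw [Real.tanh_eq_sinh_div_cosh]
    exact div_pos (Real.sinh_pos_iff.mpr hk) (Real.cosh_pos k)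
  have hcpos : ∀ k > (0:ℝ), 0 < c k := by
    intro k hk
    rw [hcF k, hFh _ (htpos k hk)]
    exact one_div_pos.mpr (hpos _ (htpos k hk))
  have hanti : StrictAntiOn c (Set.Ioi 0) := by
    intro k₁ hk₁ k₂ hk₂ hk
    rw [hcF k₁, hcF k₂]
    exact hFmono _ _ (htpos k₂ hk₂) (tanh_div_strictAnti hk₁ hk₂ hk)
  refine ⟨hcpos, hanti, fun k hk => ?_⟩
  have h2k : (0:ℝ) < 2 * k := by linarith
  have hlt : c (2 * k) < c k := hanti hk h2k (by linarith)
  have := pow_lt_pow_left₀ hlt (le_of_lt (hcpos _ h2k)) (by norm_num : 2 ≠ 0)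
  linarith
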